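/- For a real d ≥ 1 and p ∈ (0,1], define F(d,p) = 1/2 + (1/(d+p) − 1/(2d))·p if p ≤ d(√2−1), and F(d,p) = 1/2 + (d−p)/(6d+2p) otherwise. Then F(d,p) ≤ 2 − √2 for every integer d ≥ 1 and every p ∈ (0,1]; moreover F(1, √2−1) = 2 − √2 and F(2, 2√2−2) = 2 − √2. -/

import Mathlib

/-- The approximation factor of the meta-algorithm of Theorem 4.4,
parameterised by the degree bound `d` and sampling probability `p`. -/
noncomputable def metaFactor (d p : ℝ) : ℝ :=
  if p ≤ d * (Real.sqrt 2 - 1) then 1 / 2 + (1 / (d + p) - 1 / (2 * d)) * p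
  else 1 / 2 + (d - p) / (6 * d + 2 * p)

lemma sqrt_two_lemmas : (Real.sqrt 2) ^ 2 = 2 ∧ 1 < Real.sqrt 2 ∧ Real.sqrt 2 < 2 := by
  have h2 : (Real.sqrt 2) ^ 2 = 2 := Real.sq_sqrt (by norm_num)
  have h1 : 1 < Real.sqrt 2 := by
    have := Real.sqrt_lt_sqrt (by norm_num : (0:ℝ) ≤ 1) (by norm_num : (1:ℝ) < 2)
    simpa using this
  have h3 : Real.sqrt 2 < 2 := by
    nlinarith [Real.sqrt_nonneg 2]
  exact ⟨h2, h1, h3⟩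

/-- `F(d,p) ≤ 2 − √2` for every integer `d ≥ 1` and `p ∈ (0,1]`, with equality
attained at `(d,p) = (1, √2−1)` and `(d,p) = (2, 2√2−2)`. -/
theorem metaFactor_le_two_sub_sqrt_two :
    (∀ d : ℕ, 1 ≤ d → ∀ p : ℝ, 0 < p → p ≤ 1 →
      metaFactor d p ≤ 2 - Real.sqrt 2) ∧
    metaFactor 1 (Real.sqrt 2 - 1) = 2 - Real.sqrt 2 ∧
    metaFactor 2 (2 * Real.sqrt 2 - 2) = 2 - Real.sqrt 2 := by
  obtain ⟨hs2, hs1, hslt⟩ := sqrt_two_lemmas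
  set s := Real.sqrt 2 with hs
  refine ⟨?_, ?_, ?_⟩
  · intro d hd p hp hp1
    have hdr : (1:ℝ) ≤ (d:ℝ) := by exact_mod_cast hd
    unfold metaFactor
    split_ifs with h
    · have hdp : (0:ℝ) < (d:ℝ) + p := by linarith
      have h2d : (0:ℝ) < 2 * (d:ℝ) := by linarith
      have key : (1 / ((d:ℝ) + p) - 1 / (2 * d)) * p = ((d:ℝ) - p) * p / (((d:ℝ) + p) * (2 * d)) := by
        field_simp
        ring
      rw [key]
      have hD : (0:ℝ) < ((d:ℝ) + p) * (2 * d) := by positivity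
      have id1 : (3 / 2 - s) * (((d:ℝ) + p) * (2 * d)) - ((d:ℝ) - p) * p
          = (p - (d:ℝ) * (s - 1)) ^ 2 := by
        linear_combination (-(d:ℝ) ^ 2) * hs2
      have main : ((d:ℝ) - p) * p ≤ (3 / 2 - s) * (((d:ℝ) + p) * (2 * d)) := by
        nlinarith [sq_nonneg (p - (d:ℝ) * (s - 1)), id1]
      have := (div_le_iff₀ hD).mpr main
      linarith
    · push_neg at h
      have hD : (0:ℝ) < 6 * (d:ℝ) + 2 * p := by linarith
      have main : ((d:ℝ) - p) ≤ (3 / 2 - s) * (6 * (d:ℝ) + 2 * p) := by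
        nlinarith [mul_le_mul_of_nonneg_left h.le (by linarith : (0:ℝ) ≤ 4 - 2 * s)]
      have := (div_le_iff₀ hD).mpr main
      linarith
  · unfold metaFactor
    rw [if_pos (by linarith : s - 1 ≤ 1 * (s - 1))]
    have h1 : (0:ℝ) < 1 + (s - 1) := by linarith
    field_simp
    nlinarith [sq_nonneg s]
  · unfold metaFactor
    rw [if_pos (by linarith : 2 * s - 2 ≤ 2 * (s - 1))]
    have h1 : (0:ℝ) < 2 + (2 * s - 2) := by linarith
    field_simp
    have e : (2:ℝ) / (1 + (s - 1)) = s := by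
      rw [show (1:ℝ) + (s - 1) = s by ring, div_eq_iff (by linarith)]
      nlinarith
    rw [e]
    nlinarith [sq_nonneg s]
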